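/- arXiv:0804.3880 — 2 statements merged into one kernel-verified Lean document; each statement's English description precedes it below -/
import Mathlib

section
/- Let ℓ > 0 and ϱ ∈ 𝕎 (with respect to the interval [0,ℓ]). Then the function Φ⁰_ϱ(x) := limsup_{y→0} ϱ(xy)/ϱ(y), x ∈ (0,∞), is finite-valued, regular and submultiplicative; consequently the limits m(ϱ) := lim_{x→0} log Φ⁰_ϱ(x)/log x and M(ϱ) := lim_{x→∞} log Φ⁰_ϱ(x)/log x exist and satisfy −∞ < m(ϱ) ≤ M(ϱ) < +∞. -/
open MeasureTheory Metric Set Filter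
open scoped ENNReal

noncomputable section

/-- Arc-length measure on a rectifiable curve `Γ`: the one-dimensional Hausdorff
measure restricted to `Γ`. -/
def arcMeasure (Γ : Set ℂ) : Measure ℂ := (μH[1] : Measure ℂ).restrict Γ

/-- The length `|Γ|` of the curve `Γ`. -/
def curveLength (Γ : Set ℂ) : ℝ := (arcMeasure Γ Set.univ).toReal

/-- `Γ` is a Carleson (Ahlfors–David regular) curve:
`sup_{t ∈ Γ} sup_{R > 0} |Γ(t,R)|/R < ∞`. -/
def IsCarleson (Γ : Set ℂ) : Prop :=
  ∃ C : ℝ, ∀ t ∈ Γ, ∀ R : ℝ, 0 < R → (arcMeasure Γ (ball t R)).toReal ≤ C * R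

/-- A rectifiable curve homeomorphic to a line segment: the continuous injective
image of `[0,1]` under a map of finite total variation. -/
def IsSimpleArc (Γ : Set ℂ) : Prop :=
  ∃ γ : ℝ → ℂ, ContinuousOn γ (Icc 0 1) ∧ InjOn γ (Icc 0 1) ∧
    γ '' Icc 0 1 = Γ ∧ eVariationOn γ (Icc 0 1) ≠ ⊤

/-- A rectifiable Jordan curve (homeomorphic to a circle). -/
def IsJordanCurve (Γ : Set ℂ) : Prop :=
  ∃ γ : ℝ → ℂ, ContinuousOn γ (Icc 0 1) ∧ γ 0 = γ 1 ∧ InjOn γ (Ico 0 1) ∧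
    γ '' Icc 0 1 = Γ ∧ eVariationOn γ (Icc 0 1) ≠ ⊤

/-- A simple rectifiable curve: homeomorphic either to a line segment or to a circle. -/
def IsSimpleCurve (Γ : Set ℂ) : Prop := IsSimpleArc Γ ∨ IsJordanCurve Γ

/-- The Dini–Lipschitz condition on a variable exponent `p` on the curve `Γ`:
`|p(τ) - p(t)| ≤ -A / log |τ - t|` whenever `|τ - t| ≤ 1/2`. -/
def DiniLipschitz (Γ : Set ℂ) (p : ℂ → ℝ) : Prop :=
  ∃ A : ℝ, 0 < A ∧ ∀ τ ∈ Γ, ∀ t ∈ Γ, dist τ t ≤ 1/2 →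
    |p τ - p t| ≤ -A / Real.log (dist τ t)

/-- A weight on `Γ` (with respect to its arc-length measure `μ`): a measurable
function which is a.e. positive and finite. -/
def IsWeight (μ : Measure ℂ) (w : ℂ → ℝ≥0∞) : Prop :=
  AEMeasurable w μ ∧ ∀ᵐ τ ∂μ, 0 < w τ ∧ w τ < ⊤

/-- The modular `∫ (g(τ)/λ)^{p(τ)} dμ(τ)` of the variable Lebesgue space. -/
def vModular (μ : Measure ℂ) (p : ℂ → ℝ) (g : ℂ → ℝ≥0∞) (lam : ℝ) : ℝ≥0∞ :=
  ∫⁻ τ, (g τ / ENNReal.ofReal lam) ^ p τ ∂μ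

/-- The Luxemburg–Nakano norm of an `ℝ≥0∞`-valued function. -/
def luxNorm (μ : Measure ℂ) (p : ℂ → ℝ) (g : ℂ → ℝ≥0∞) : ℝ :=
  sInf {lam : ℝ | 0 < lam ∧ vModular μ p g lam ≤ 1}

/-- The norm of `f` in the weighted variable Lebesgue space `L^{p(·)}(Γ,w)`. -/
def wNorm (μ : Measure ℂ) (p : ℂ → ℝ) (w : ℂ → ℝ≥0∞) (f : ℂ → ℂ) : ℝ :=
  luxNorm μ p fun τ => ENNReal.ofReal ‖f τ‖ * w τ

/-- Membership of `f` in the weighted variable Lebesgue space `L^{p(·)}(Γ,w)`. -/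
def MemWVL (μ : Measure ℂ) (p : ℂ → ℝ) (w : ℂ → ℝ≥0∞) (f : ℂ → ℂ) : Prop :=
  ∃ lam : ℝ, 0 < lam ∧ vModular μ p (fun τ => ENNReal.ofReal ‖f τ‖ * w τ) lam < ⊤

/-- The Cauchy singular integral operator (principal value):
`(Sf)(t) = (1/(πi)) lim_{R → 0⁺} ∫_{Γ ∖ Γ(t,R)} f(τ)/(τ - t) dτ`. -/
def cauchyS (μ : Measure ℂ) (f : ℂ → ℂ) (t : ℂ) : ℂ :=
  ((Real.pi : ℂ) * Complex.I)⁻¹ *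
    limUnder (nhdsWithin (0:ℝ) (Ioi 0))
      fun R => ∫ τ in {τ : ℂ | R ≤ dist τ t}, f τ / (τ - t) ∂μ

/-- Boundedness of the Cauchy singular integral operator on `L^{p(·)}(Γ,w)`. -/
def CauchySBounded (μ : Measure ℂ) (p : ℂ → ℝ) (w : ℂ → ℝ≥0∞) : Prop :=
  ∃ C : ℝ, 0 < C ∧ ∀ f : ℂ → ℂ, MemWVL μ p w f →
    wNorm μ p w (cauchyS μ f) ≤ C * wNorm μ p w f

/-- The class `W` on `[0,ℓ]`: continuous, vanishing at `0`, positive on `(0,ℓ]`,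
nonnegative, and almost increasing. -/
def ClassW (ℓ : ℝ) (rho : ℝ → ℝ) : Prop :=
  ContinuousOn rho (Icc 0 ℓ) ∧ rho 0 = 0 ∧ (∀ x : ℝ, 0 < x → x ≤ ℓ → 0 < rho x) ∧
    (∀ x ∈ Icc 0 ℓ, 0 ≤ rho x) ∧
    ∃ C : ℝ, 0 < C ∧ ∀ x ∈ Icc 0 ℓ, ∀ y ∈ Icc 0 ℓ, x ≤ y → rho x ≤ C * rho y

/-- The class `𝕎` on `[0,ℓ]`: `x^α ϱ(x) ∈ W` and `x^β / ϱ(x) ∈ W` for some `α, β ∈ ℝ`. -/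
def ClassWW (ℓ : ℝ) (rho : ℝ → ℝ) : Prop :=
  ∃ a b : ℝ, ClassW ℓ (fun x => x ^ a * rho x) ∧ ClassW ℓ (fun x => x ^ b / rho x)

/-- `Φ⁰_ϱ(x) = limsup_{y → 0⁺} ϱ(xy)/ϱ(y)`, as an extended nonnegative real. -/
def Phi0E (rho : ℝ → ℝ) (x : ℝ) : ℝ≥0∞ :=
  Filter.limsup (fun y => ENNReal.ofReal (rho (x * y) / rho y)) (nhdsWithin (0:ℝ) (Ioi 0))

/-- `Φ⁰_ϱ(x)` as a real number. -/
def Phi0 (rho : ℝ → ℝ) (x : ℝ) : ℝ := (Phi0E rho x).toReal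

/-- The lower Matuszewska–Orlicz index `m(ϱ) = lim_{x → 0⁺} log Φ⁰_ϱ(x) / log x`. -/
def moIndexLower (rho : ℝ → ℝ) : ℝ :=
  limUnder (nhdsWithin (0:ℝ) (Ioi 0)) fun x => Real.log (Phi0 rho x) / Real.log x

/-- The upper Matuszewska–Orlicz index `M(ϱ) = lim_{x → ∞} log Φ⁰_ϱ(x) / log x`. -/
def moIndexUpper (rho : ℝ → ℝ) : ℝ :=
  limUnder atTop fun x => Real.log (Phi0 rho x) / Real.log x

/-- Submultiplicativity of `Φ : (0,∞) → ℝ`. -/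
def Submultiplicative (Φ : ℝ → ℝ) : Prop :=
  ∀ x : ℝ, 0 < x → ∀ y : ℝ, 0 < y → Φ (x * y) ≤ Φ x * Φ y

/-- Regularity of `Φ : (0,∞) → ℝ`: boundedness in an open neighborhood of `1`. -/
def RegularFun (Φ : ℝ → ℝ) : Prop :=
  ∃ ε C : ℝ, 0 < ε ∧ ∀ x : ℝ, |x - 1| < ε → Φ x ≤ C

/-- The lower index `α(Φ) = sup_{x ∈ (0,1)} log Φ(x) / log x`. -/
def alphaInd (Φ : ℝ → ℝ) : ℝ :=
  sSup ((fun x => Real.log (Φ x) / Real.log x) '' Ioo 0 1)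

/-- The upper index `β(Φ) = inf_{x ∈ (1,∞)} log Φ(x) / log x`. -/
def betaInd (Φ : ℝ → ℝ) : ℝ :=
  sInf ((fun x => Real.log (Φ x) / Real.log x) '' Ioi 1)

/-- The mean of `log w` over the portion `Γ(t,R)` of the curve. -/
def logMean (μ : Measure ℂ) (w : ℂ → ℝ≥0∞) (t : ℂ) (R : ℝ) : ℝ :=
  (μ (ball t R)).toReal⁻¹ * ∫ τ in ball t R, Real.log ((w τ).toReal) ∂μ

/-- `H_{w,t}(R₁,R₂)`: ratio of geometric means of the weight. -/
def Hfun (μ : Measure ℂ) (w : ℂ → ℝ≥0∞) (t : ℂ) (R₁ R₂ : ℝ) : ℝ :=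
  Real.exp (logMean μ w t R₁) / Real.exp (logMean μ w t R₂)

/-- `(V⁰_t w)(x) = limsup_{R → 0⁺} H_{w,t}(xR, R)`. -/
def V0 (μ : Measure ℂ) (w : ℂ → ℝ≥0∞) (t : ℂ) (x : ℝ) : ℝ :=
  Filter.limsup (fun R => Hfun μ w t (x * R) R) (nhdsWithin (0:ℝ) (Ioi 0))

/-- The conjugate exponent `q(τ) = p(τ)/(p(τ)-1)`. -/
def conjExp (p : ℂ → ℝ) (τ : ℂ) : ℝ := p τ / (p τ - 1)

/-- The Muckenhoupt-type class `A_{p(·)}(Γ)`: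
`sup_{t ∈ Γ} sup_{R > 0} (1/R) ‖w χ_{Γ(t,R)}‖_{p(·)} ‖w⁻¹ χ_{Γ(t,R)}‖_{q(·)} < ∞`. -/
def MuckenhouptA (Γ : Set ℂ) (p : ℂ → ℝ) (w : ℂ → ℝ≥0∞) : Prop :=
  ∃ C : ℝ, ∀ t ∈ Γ, ∀ R : ℝ, 0 < R →
    luxNorm (arcMeasure Γ) p ((ball t R).indicator w) *
      luxNorm (arcMeasure Γ) (conjExp p) ((ball t R).indicator fun τ => (w τ)⁻¹) ≤ C * R

/-- The radial oscillating weight `w(τ) = ∏_{k=1}^n w_k(|τ - t_k|)`. -/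
def radialWeight {n : ℕ} (ts : Fin n → ℂ) (ws : Fin n → ℝ → ℝ) (τ : ℂ) : ℝ≥0∞ :=
  ∏ k, ENNReal.ofReal (ws k (dist τ (ts k)))

set_option linter.unusedSectionVars false



lemma my_fekete {f : ℝ → ℝ} {A B : ℝ} (hA : 0 ≤ A) (hB : 0 ≤ B)
    (hsub : ∀ s t : ℝ, f (s + t) ≤ f s + f t)
    (hub : ∀ t : ℝ, f t ≤ A + B * |t|) :
    Tendsto (fun t => f t / t) atTop (nhds (sInf ((fun t => f t / t) '' Ici 1))) := by
  have hf0 : 0 ≤ f 0 := by have := hsub 0 0; simp at this; linarith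
  have hlb : ∀ t : ℝ, -(A + B * |t|) ≤ f t := by
    intro t
    have h1 : f 0 ≤ f t + f (-t) := by have := hsub t (-t); simpa using this
    have := hub (-t); rw [abs_neg] at this; linarith
  set S := (fun t => f t / t) '' Ici 1 with hS
  have hne : S.Nonempty := ⟨f 1 / 1, 1, Set.self_mem_Ici, rfl⟩
  have hbdd : BddBelow S := by
    refine ⟨-(A + B), ?_⟩
    rintro u ⟨t, ht, rfl⟩
    have ht1 : (1:ℝ) ≤ t := ht
    have ht0 : (0:ℝ) < t := lt_of_lt_of_le one_pos ht1
    have h1 : -(A + B * t) ≤ f t := by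
      have := hlb t; rwa [abs_of_pos ht0] at this
    rw [le_div_iff₀ ht0]
    nlinarith
  set β := sInf S with hβ
  have hβle : ∀ t : ℝ, 1 ≤ t → β ≤ f t / t := fun t ht => csInf_le hbdd ⟨t, ht, rfl⟩
  rw [Metric.tendsto_atTop]
  intro ε hε
  obtain ⟨u, ⟨s, hs1, rfl⟩, hu⟩ : ∃ u ∈ S, u < β + ε / 2 :=
    exists_lt_of_csInf_lt hne (by linarith)
  have hs0 : (0:ℝ) < s := lt_of_lt_of_le one_pos hs1
  -- n-fold subadditivity
  have hnfold : ∀ n : ℕ, f ((n : ℝ) * s) ≤ (n : ℝ) * f s + f 0 := by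
    intro n
    induction n with
    | zero => simp
    | succ n ih =>
        have h := hsub ((n:ℝ) * s) s
        have he : ((n:ℝ) * s + s) = ((n:ℝ)+1) * s := by ring
        rw [he] at h
        push_cast
        linarith
  set K := |f s| + |f 0| + A + B * s with hK
  have hK0 : 0 ≤ K := by positivity
  have hclaim : ∀ t : ℝ, s ≤ t → f t ≤ (t / s) * f s + K := by
    intro t hts
    have ht0 : (0:ℝ) < t := lt_of_lt_of_le hs0 hts
    set n := ⌊t / s⌋₊ with hn
    have hts1 : (1:ℝ) ≤ t / s := (one_le_div hs0).2 hts
    have hn1 : (1:ℕ) ≤ n := Nat.le_floor (by exact_mod_cast hts1)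
    have hnle : (n : ℝ) ≤ t / s := Nat.floor_le (by linarith)
    have hnlt : t / s < (n : ℝ) + 1 := Nat.lt_floor_add_one _
    have hns : (n : ℝ) * s ≤ t := by rw [← le_div_iff₀ hs0] at *; linarith [hnle]
    set r := t - (n : ℝ) * s with hr
    have hr0 : 0 ≤ r := by linarith
    have hrs : r < s := by
      have : t < ((n:ℝ) + 1) * s := by
        calc t = (t / s) * s := by field_simp
          _ < ((n:ℝ)+1) * s := by apply mul_lt_mul_of_pos_right hnlt hs0
      simp only [hr]; linarith
    have h1 : f t ≤ f ((n:ℝ) * s) + f r := by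
      have := hsub ((n:ℝ) * s) r
      have ht : (n:ℝ) * s + r = t := by ring
      rwa [ht] at this
    have h2 : f r ≤ A + B * s := by
      have := hub r; rw [abs_of_nonneg hr0] at this; nlinarith
    have h3 : (n : ℝ) * f s ≤ (t / s) * f s + |f s| := by
      rcases le_or_gt 0 (f s) with h | h
      · have := mul_le_mul_of_nonneg_right hnle h
        have : (n:ℝ) * f s ≤ (t/s) * f s := this
        linarith [abs_nonneg (f s)]
      · have hge : t / s - 1 ≤ (n : ℝ) := by linarith
        have := mul_le_mul_of_nonpos_right hge h.le
        rw [abs_of_neg h]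
        nlinarith
    have h4 := hnfold n
    have h5 : f 0 ≤ |f 0| := le_abs_self _
    linarith
  refine ⟨max s (max 1 (2 * K / ε + 1)), fun t ht => ?_⟩
  have hts : s ≤ t := le_trans (le_max_left _ _) ht
  have ht1 : (1:ℝ) ≤ t := le_trans (le_trans (le_max_left _ _) (le_max_right _ _)) ht
  have ht0 : (0:ℝ) < t := lt_of_lt_of_le one_pos ht1
  have htK : 2 * K / ε + 1 ≤ t := le_trans (le_trans (le_max_right _ _) (le_max_right _ _)) ht
  have hKt : K / t ≤ ε / 2 := by
    rw [div_le_div_iff₀ ht0 two_pos]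
    have h1 : 2 * K / ε ≤ t - 1 := by linarith
    rw [div_le_iff₀ hε] at h1
    nlinarith
  have hup : f t / t ≤ f s / s + ε / 2 := by
    have h1 := hclaim t hts
    have h2 : f t / t ≤ ((t/s) * f s + K) / t := by gcongr
    have h3 : ((t/s) * f s + K) / t = f s / s + K / t := by
      field_simp
    rw [h3] at h2
    linarith
  have hlow : β ≤ f t / t := hβle t ht1
  rw [Real.dist_eq, abs_lt]
  constructor <;> nlinarith

lemma my_rpow_le_max {l u x c : ℝ} (hl : 0 < l) (hlx : l ≤ x) (hxu : x ≤ u) :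
    x ^ c ≤ max (l ^ c) (u ^ c) := by
  rcases le_or_gt 0 c with h | h
  · exact le_max_of_le_right (Real.rpow_le_rpow (by linarith) hxu h)
  · exact le_max_of_le_left (Real.rpow_le_rpow_of_nonpos hl hlx h.le)

section main
variable {ℓ : ℝ} {rho : ℝ → ℝ} {a b C₁ C₂ : ℝ}
  (hℓ : 0 < ℓ) (hC₁ : 0 < C₁) (hC₂ : 0 < C₂)
  (hpos : ∀ x : ℝ, 0 < x → x ≤ ℓ → 0 < rho x)
  (h₁ : ∀ x ∈ Icc 0 ℓ, ∀ y ∈ Icc 0 ℓ, x ≤ y → x ^ a * rho x ≤ C₁ * (y ^ a * rho y))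
  (h₂ : ∀ x ∈ Icc 0 ℓ, ∀ y ∈ Icc 0 ℓ, x ≤ y → x ^ b / rho x ≤ C₂ * (y ^ b / rho y))

include hℓ hC₁ hC₂ hpos h₁ h₂

lemma ratio_bound : ∀ x y : ℝ, 0 < x → 0 < y → y ≤ ℓ → x * y ≤ ℓ →
    rho (x * y) / rho y ≤ C₁ * x ^ (-a) + C₂ * x ^ b := by
  intro x y hx hy hyℓ hxyℓ
  have hxy : 0 < x * y := mul_pos hx hy
  have hρy : 0 < rho y := hpos y hy hyℓ
  have hρxy : 0 < rho (x * y) := hpos _ hxy hxyℓ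
  have hxa : (0:ℝ) < x ^ a := Real.rpow_pos_of_pos hx a
  have hxb : (0:ℝ) < x ^ b := Real.rpow_pos_of_pos hx b
  have hya : (0:ℝ) < y ^ a := Real.rpow_pos_of_pos hy a
  have hyb : (0:ℝ) < y ^ b := Real.rpow_pos_of_pos hy b
  have hterm1 : (0:ℝ) ≤ C₁ * x ^ (-a) := by positivity
  have hterm2 : (0:ℝ) ≤ C₂ * x ^ b := by positivity
  rcases le_or_gt x 1 with hx1 | hx1
  · -- x ≤ 1 : use h₁ at (x*y, y)
    have hxyy : x * y ≤ y := by nlinarith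
    have key := h₁ (x*y) ⟨hxy.le, hxyℓ⟩ y ⟨hy.le, hyℓ⟩ hxyy
    rw [Real.mul_rpow hx.le hy.le] at key
    -- x^a * y^a * rho (x*y) ≤ C₁ * (y^a * rho y)
    have h2 : x ^ a * rho (x * y) ≤ C₁ * rho y := by
      have h' : (x ^ a * rho (x * y)) * y ^ a ≤ (C₁ * rho y) * y ^ a := by nlinarith
      exact le_of_mul_le_mul_right h' hya
    have : rho (x * y) / rho y ≤ C₁ * x ^ (-a) := by
      rw [div_le_iff₀ hρy, Real.rpow_neg hx.le]
      calc rho (x * y) = (x ^ a)⁻¹ * (x ^ a * rho (x * y)) := by field_simp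
        _ ≤ (x ^ a)⁻¹ * (C₁ * rho y) := by
            exact mul_le_mul_of_nonneg_left h2 (by positivity)
        _ = C₁ * (x ^ a)⁻¹ * rho y := by ring
    linarith
  · -- x > 1 : use h₂ at (y, x*y)
    have hyxy : y ≤ x * y := by nlinarith
    have key := h₂ y ⟨hy.le, hyℓ⟩ (x*y) ⟨hxy.le, hxyℓ⟩ hyxy
    rw [Real.mul_rpow hx.le hy.le] at key
    -- y^b / rho y ≤ C₂ * (x^b * y^b / rho (x*y))
    rw [← mul_div_assoc, div_le_div_iff₀ hρy hρxy] at key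
    -- y^b * rho (x*y) ≤ C₂ * (x^b*y^b) * rho y
    have h2 : rho (x * y) ≤ C₂ * x ^ b * rho y := by
      have h' : rho (x * y) * y ^ b ≤ (C₂ * x ^ b * rho y) * y ^ b := by nlinarith
      exact le_of_mul_le_mul_right h' hyb
    have : rho (x * y) / rho y ≤ C₂ * x ^ b := by
      rw [div_le_iff₀ hρy]; linarith
    linarith

lemma PhiE_le : ∀ x : ℝ, 0 < x →
    Phi0E rho x ≤ ENNReal.ofReal (C₁ * x ^ (-a) + C₂ * x ^ b) := by
  intro x hx
  refine Filter.limsup_le_of_le (by isBoundedDefault) ?_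
  have hmem : Ioo (0:ℝ) (min ℓ (ℓ / x)) ∈ nhdsWithin (0:ℝ) (Ioi 0) := by
    apply Ioo_mem_nhdsGT_of_mem
    exact ⟨le_refl 0, lt_min hℓ (by positivity)⟩
  filter_upwards [hmem] with y hy
  apply ENNReal.ofReal_le_ofReal
  exact ratio_bound hℓ hC₁ hC₂ hpos h₁ h₂ x y hx hy.1 (le_of_lt (lt_of_lt_of_le hy.2 (min_le_left _ _)))
    (by
      have := lt_of_lt_of_le hy.2 (min_le_right _ _)
      rw [lt_div_iff₀ hx] at this
      linarith)

lemma PhiE_ne_top : ∀ x : ℝ, 0 < x → Phi0E rho x ≠ ⊤ := fun x hx =>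
  ne_top_of_le_ne_top ENNReal.ofReal_ne_top (PhiE_le hℓ hC₁ hC₂ hpos h₁ h₂ x hx)

lemma PhiE_one : Phi0E rho 1 = 1 := by
  have : Phi0E rho 1 = Filter.limsup (fun _ => (1:ℝ≥0∞)) (nhdsWithin (0:ℝ) (Ioi 0)) := by
    apply Filter.limsup_congr
    have hmem : Ioo (0:ℝ) ℓ ∈ nhdsWithin (0:ℝ) (Ioi 0) :=
      Ioo_mem_nhdsGT_of_mem ⟨le_refl 0, hℓ⟩
    filter_upwards [hmem] with y hy
    rw [one_mul, div_self (hpos y hy.1 hy.2.le).ne']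
    simp
  rw [this, Filter.limsup_const]

lemma PhiE_submul : ∀ x : ℝ, 0 < x → ∀ y : ℝ, 0 < y →
    Phi0E rho (x * y) ≤ Phi0E rho x * Phi0E rho y := by
  intro x hx y hy
  set P := Phi0E rho x with hP
  set Q := Phi0E rho y with hQ
  have hPt : P ≠ ⊤ := PhiE_ne_top hℓ hC₁ hC₂ hpos h₁ h₂ x hx
  have hQt : Q ≠ ⊤ := PhiE_ne_top hℓ hC₁ hC₂ hpos h₁ h₂ y hy
  have htmul : Tendsto (fun z : ℝ => y * z) (nhdsWithin (0:ℝ) (Ioi 0)) (nhdsWithin (0:ℝ) (Ioi 0)) := by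
    apply tendsto_nhdsWithin_of_tendsto_nhds_of_eventually_within
    · have : Tendsto (fun z : ℝ => y * z) (nhds 0) (nhds (y * 0)) :=
        (continuous_mul_left y).tendsto 0
      rw [mul_zero] at this
      exact this.mono_left nhdsWithin_le_nhds
    · filter_upwards [self_mem_nhdsWithin] with z hz
      exact mul_pos hy hz
  have key : ∀ c d : ℝ≥0∞, P < c → Q < d → Phi0E rho (x * y) ≤ c * d := by
    intro c d hc hd
    have e1 : ∀ᶠ w in nhdsWithin (0:ℝ) (Ioi 0),
        ENNReal.ofReal (rho (x * w) / rho w) < c := eventually_lt_of_limsup_lt hc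
    have e2 : ∀ᶠ z in nhdsWithin (0:ℝ) (Ioi 0),
        ENNReal.ofReal (rho (y * z) / rho z) < d := eventually_lt_of_limsup_lt hd
    have e1' : ∀ᶠ z in nhdsWithin (0:ℝ) (Ioi 0),
        ENNReal.ofReal (rho (x * (y * z)) / rho (y * z)) < c := htmul.eventually e1
    refine Filter.limsup_le_of_le (by isBoundedDefault) ?_
    have hmem : Ioo (0:ℝ) (min (min ℓ (ℓ / y)) (ℓ / (x * y))) ∈ nhdsWithin (0:ℝ) (Ioi 0) := by
      apply Ioo_mem_nhdsGT_of_mem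
      refine ⟨le_refl 0, lt_min (lt_min hℓ (by positivity)) (by positivity)⟩
    filter_upwards [e1', e2, hmem] with z h1 h2 hz
    have hz0 : 0 < z := hz.1
    have hyz : 0 < y * z := mul_pos hy hz0
    have hyzℓ : y * z ≤ ℓ := by
      have := lt_of_lt_of_le hz.2 (le_trans (min_le_left _ _) (min_le_right _ _))
      rw [lt_div_iff₀ hy] at this
      linarith
    have hxyzℓ : x * (y * z) ≤ ℓ := by
      have := lt_of_lt_of_le hz.2 (min_le_right _ _)
      rw [lt_div_iff₀ (mul_pos hx hy)] at this
      nlinarith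
    have hρyz : 0 < rho (y * z) := hpos _ hyz hyzℓ
    have hρxyz : 0 < rho (x * (y * z)) := hpos _ (by positivity) hxyzℓ
    have heq : ENNReal.ofReal (rho (x * y * z) / rho z) =
        ENNReal.ofReal (rho (x * (y * z)) / rho (y * z)) *
        ENNReal.ofReal (rho (y * z) / rho z) := by
      have hρz : 0 < rho z := hpos z hz0 (le_trans hz.2.le (le_trans (min_le_left _ _) (min_le_left _ _)))
      rw [← ENNReal.ofReal_mul (by positivity : (0:ℝ) ≤ rho (x * (y*z)) / rho (y*z))]
      congr 1
      rw [mul_assoc]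
      field_simp
    rw [heq]
    exact mul_le_mul' h1.le h2.le
  have htail : Tendsto (fun ε : ℝ≥0∞ => (P + ε) * (Q + ε)) (nhdsWithin 0 (Ioi 0)) (nhds (P * Q)) := by
    have t1 : Tendsto (fun ε : ℝ≥0∞ => P + ε) (nhds 0) (nhds P) := by
      simpa using tendsto_const_nhds.add (tendsto_id (α := ℝ≥0∞) (x := nhds 0))
    have t2 : Tendsto (fun ε : ℝ≥0∞ => Q + ε) (nhds 0) (nhds Q) := by
      simpa using tendsto_const_nhds.add (tendsto_id (α := ℝ≥0∞) (x := nhds 0))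
    exact (ENNReal.Tendsto.mul t1 (Or.inr hQt) t2 (Or.inr hPt)).mono_left nhdsWithin_le_nhds
  apply ge_of_tendsto htail
  filter_upwards [self_mem_nhdsWithin] with ε hε
  exact key _ _ (ENNReal.lt_add_right hPt (ne_of_gt hε)) (ENNReal.lt_add_right hQt (ne_of_gt hε))

end main


/-- If `ℓ > 0` and `ϱ ∈ 𝕎` (with respect to `[0,ℓ]`), then
`Φ⁰_ϱ(x) = limsup_{y → 0} ϱ(xy)/ϱ(y)` is finite-valued, regular and submultiplicative;
consequently the limits `m(ϱ) = lim_{x → 0} log Φ⁰_ϱ(x)/log x` and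
`M(ϱ) = lim_{x → ∞} log Φ⁰_ϱ(x)/log x` exist and `-∞ < m(ϱ) ≤ M(ϱ) < +∞`. -/
theorem statement9 (ℓ : ℝ) (hℓ : 0 < ℓ) (rho : ℝ → ℝ) (hrho : ClassWW ℓ rho) :
    (∀ x : ℝ, 0 < x → Phi0E rho x ≠ ⊤) ∧
    RegularFun (Phi0 rho) ∧ Submultiplicative (Phi0 rho) ∧
    Tendsto (fun x => Real.log (Phi0 rho x) / Real.log x) (nhdsWithin (0:ℝ) (Ioi 0))
      (nhds (moIndexLower rho)) ∧
    Tendsto (fun x => Real.log (Phi0 rho x) / Real.log x) atTop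
      (nhds (moIndexUpper rho)) ∧
    moIndexLower rho ≤ moIndexUpper rho := by
  obtain ⟨a, b, hW1, hW2⟩ := hrho
  obtain ⟨-, -, hpos1, -, C₁, hC₁, h₁⟩ := hW1
  obtain ⟨-, -, hpos2, -, C₂, hC₂, h₂⟩ := hW2
  have hpos : ∀ x : ℝ, 0 < x → x ≤ ℓ → 0 < rho x := by
    intro x hx hxℓ
    have h : 0 < x ^ a * rho x := hpos1 x hx hxℓ
    have hxa : (0:ℝ) < x ^ a := Real.rpow_pos_of_pos hx a
    nlinarith
  have h₁' : ∀ x ∈ Icc 0 ℓ, ∀ y ∈ Icc 0 ℓ, x ≤ y → x ^ a * rho x ≤ C₁ * (y ^ a * rho y) :=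
    fun x hx y hy hxy => h₁ x hx y hy hxy
  have h₂' : ∀ x ∈ Icc 0 ℓ, ∀ y ∈ Icc 0 ℓ, x ≤ y → x ^ b / rho x ≤ C₂ * (y ^ b / rho y) :=
    fun x hx y hy hxy => h₂ x hx y hy hxy
  have hfin : ∀ x : ℝ, 0 < x → Phi0E rho x ≠ ⊤ := PhiE_ne_top hℓ hC₁ hC₂ hpos h₁' h₂'
  have hΦle : ∀ x : ℝ, 0 < x → Phi0 rho x ≤ C₁ * x ^ (-a) + C₂ * x ^ b := by
    intro x hx
    have h := PhiE_le hℓ hC₁ hC₂ hpos h₁' h₂' x hx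
    have := ENNReal.toReal_mono ENNReal.ofReal_ne_top h
    rwa [ENNReal.toReal_ofReal (by positivity)] at this
  have hΦ1 : Phi0 rho 1 = 1 := by
    rw [Phi0, PhiE_one hℓ hC₁ hC₂ hpos h₁' h₂', ENNReal.toReal_one]
  have hsubΦ : Submultiplicative (Phi0 rho) := by
    intro x hx y hy
    rw [Phi0, Phi0, Phi0, ← ENNReal.toReal_mul]
    exact ENNReal.toReal_mono (ENNReal.mul_ne_top (hfin x hx) (hfin y hy))
      (PhiE_submul hℓ hC₁ hC₂ hpos h₁' h₂' x hx y hy)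
  have hΦnn : ∀ x : ℝ, 0 ≤ Phi0 rho x := fun x => ENNReal.toReal_nonneg
  have hΦpos : ∀ x : ℝ, 0 < x → 0 < Phi0 rho x := by
    intro x hx
    have hinv : (0:ℝ) < x⁻¹ := by positivity
    have h := hsubΦ x hx x⁻¹ hinv
    rw [mul_inv_cancel₀ hx.ne', hΦ1] at h
    have h2 := hΦnn x⁻¹
    have h3 := hΦnn x
    nlinarith
  have hreg : RegularFun (Phi0 rho) := by
    refine ⟨1/2, C₁ * max ((1/2:ℝ) ^ (-a)) ((3/2:ℝ) ^ (-a)) +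
      C₂ * max ((1/2:ℝ) ^ b) ((3/2:ℝ) ^ b), one_half_pos, ?_⟩
    intro x hx
    rw [abs_lt] at hx
    have hx1 : (1/2:ℝ) ≤ x := by linarith
    have hx2 : x ≤ (3/2:ℝ) := by linarith
    have hx0 : (0:ℝ) < x := by linarith
    have t1 := my_rpow_le_max (c := -a) one_half_pos hx1 hx2
    have t2 := my_rpow_le_max (c := b) one_half_pos hx1 hx2
    have := hΦle x hx0
    nlinarith
  -- the auxiliary subadditive function
  set f : ℝ → ℝ := fun t => Real.log (Phi0 rho (Real.exp t)) with hf
  have hf0 : f 0 = 0 := by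
    simp only [hf, Real.exp_zero, hΦ1, Real.log_one]
  have hsubf : ∀ s t : ℝ, f (s + t) ≤ f s + f t := by
    intro s t
    have h1 := hsubΦ (Real.exp s) (Real.exp_pos s) (Real.exp t) (Real.exp_pos t)
    have h2 : Phi0 rho (Real.exp (s + t)) ≤ Phi0 rho (Real.exp s) * Phi0 rho (Real.exp t) := by
      rw [Real.exp_add]; exact h1
    calc f (s + t) ≤ Real.log (Phi0 rho (Real.exp s) * Phi0 rho (Real.exp t)) := by
          apply (Real.log_le_log_iff (hΦpos _ (Real.exp_pos _))
            (mul_pos (hΦpos _ (Real.exp_pos _)) (hΦpos _ (Real.exp_pos _)))).2 h2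
      _ = f s + f t := Real.log_mul (hΦpos _ (Real.exp_pos _)).ne' (hΦpos _ (Real.exp_pos _)).ne'
  set B := max |a| |b| with hB
  set Af := max 0 (Real.log (C₁ + C₂)) with hAf
  have hBnn : 0 ≤ B := le_trans (abs_nonneg a) (le_max_left _ _)
  have hAnn : 0 ≤ Af := le_max_left _ _
  have hub : ∀ t : ℝ, f t ≤ Af + B * |t| := by
    intro t
    have hxp : (0:ℝ) < Real.exp t := Real.exp_pos t
    have hpow : ∀ c : ℝ, (Real.exp t) ^ c = Real.exp (t * c) := by
      intro c
      rw [Real.rpow_def_of_pos hxp, Real.log_exp]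
    have hb1 : Real.exp (t * (-a)) ≤ Real.exp (B * |t|) := by
      apply Real.exp_le_exp.2
      calc t * (-a) ≤ |t * (-a)| := le_abs_self _
        _ = |t| * |a| := by rw [abs_mul, abs_neg]
        _ ≤ |t| * B := by
            apply mul_le_mul_of_nonneg_left (le_max_left _ _) (abs_nonneg t)
        _ = B * |t| := mul_comm _ _
    have hb2 : Real.exp (t * b) ≤ Real.exp (B * |t|) := by
      apply Real.exp_le_exp.2
      calc t * b ≤ |t * b| := le_abs_self _
        _ = |t| * |b| := abs_mul _ _
        _ ≤ |t| * B := by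
            apply mul_le_mul_of_nonneg_left (le_max_right _ _) (abs_nonneg t)
        _ = B * |t| := mul_comm _ _
    have h1 : Phi0 rho (Real.exp t) ≤ (C₁ + C₂) * Real.exp (B * |t|) := by
      have := hΦle (Real.exp t) hxp
      rw [hpow (-a), hpow b] at this
      nlinarith
    calc f t ≤ Real.log ((C₁ + C₂) * Real.exp (B * |t|)) := by
          apply (Real.log_le_log_iff (hΦpos _ hxp) (by positivity)).2 h1
      _ = Real.log (C₁ + C₂) + B * |t| := by
          rw [Real.log_mul (by positivity) (Real.exp_ne_zero _), Real.log_exp]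
      _ ≤ Af + B * |t| := by
          have : Real.log (C₁ + C₂) ≤ Af := le_max_right _ _
          linarith
  have hM := my_fekete hAnn hBnn hsubf hub
  set β := sInf ((fun t => f t / t) '' Ici 1) with hβ
  set g : ℝ → ℝ := fun t => f (-t) with hg
  have hsubg : ∀ s t : ℝ, g (s + t) ≤ g s + g t := by
    intro s t
    simp only [hg, neg_add]
    exact hsubf (-s) (-t)
  have hubg : ∀ t : ℝ, g t ≤ Af + B * |t| := by
    intro t
    have := hub (-t)
    rwa [abs_neg] at this
  have hm' := my_fekete hAnn hBnn hsubg hubg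
  set β' := sInf ((fun t => g t / t) '' Ici 1) with hβ'
  have hmB : Tendsto (fun t => f t / t) atBot (nhds (-β')) := by
    have h1 := (hm'.comp tendsto_neg_atBot_atTop).neg
    apply h1.congr
    intro t
    show -(g (-t) / (-t)) = f t / t
    simp only [hg, neg_neg, div_neg, neg_neg]
  -- transfer to x-variable
  have hMx : Tendsto (fun x => Real.log (Phi0 rho x) / Real.log x) atTop (nhds β) := by
    have h1 := hM.comp Real.tendsto_log_atTop
    apply h1.congr'
    filter_upwards [eventually_gt_atTop (0:ℝ)] with x hx
    show f (Real.log x) / Real.log x = _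
    rw [hf]
    simp only
    rw [Real.exp_log hx]
  have hmx : Tendsto (fun x => Real.log (Phi0 rho x) / Real.log x)
      (nhdsWithin (0:ℝ) (Ioi 0)) (nhds (-β')) := by
    have h1 := hmB.comp Real.tendsto_log_nhdsGT_zero
    apply h1.congr'
    filter_upwards [self_mem_nhdsWithin] with x hx
    show f (Real.log x) / Real.log x = _
    rw [hf]
    simp only
    rw [Real.exp_log hx]
  have hle : -β' ≤ β := by
    refine le_of_tendsto_of_tendsto hm'.neg hM ?_
    filter_upwards [eventually_ge_atTop (1:ℝ)] with t ht
    have ht0 : (0:ℝ) < t := lt_of_lt_of_le one_pos ht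
    have h1 : 0 ≤ f t + f (-t) := by
      have := hsubf t (-t)
      rw [add_neg_cancel, hf0] at this
      linarith
    show -(g t / t) ≤ f t / t
    have he : -(g t / t) = (-(f (-t))) / t := by simp only [hg, neg_div]
    rw [he]
    exact (div_le_div_iff_of_pos_right ht0).2 (by linarith)
  have hMeq : moIndexUpper rho = β := by rw [moIndexUpper]; exact hMx.limUnder_eq
  have hmeq : moIndexLower rho = -β' := by rw [moIndexLower]; exact hmx.limUnder_eq
  refine ⟨hfin, hreg, hsubΦ, ?_, ?_, ?_⟩
  · rw [hmeq]; exact hmx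
  · rw [hMeq]; exact hMx
  · rw [hmeq, hMeq]; exact hle


end
end

section
/- For 1 < α < 2, the curve Γ_α := {0} ∪ {τ ∈ ℂ : τ = x + i x^α sin(1/x), 0 < x ≤ 1} is rectifiable (the path γ(0) = 0, γ(x) = x + i x^α sin(1/x) for 0 < x ≤ 1 has finite length) but is not a Carleson curve: with arc-length measure on Γ_α, sup_{t∈Γ_α} sup_{R>0} |Γ_α(t,R)|/R = ∞ (indeed this supremum is already infinite at the point t = 0). -/
open MeasureTheory Metric Set Filter
open scoped ENNReal

noncomputable section

/-- The spiral-like path `γ(x) = x + i x^α sin(1/x)` (with `γ(0) = 0`). -/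
def oscCurve (a : ℝ) (x : ℝ) : ℂ :=
  Complex.ofReal x + Complex.I * Complex.ofReal (x ^ a * Real.sin x⁻¹)


namespace S14

open Real

variable {a u v x : ℝ}

def g (a x : ℝ) : ℝ := x ^ a * Real.sin x⁻¹

def g' (a x : ℝ) : ℝ :=
  a * x ^ (a - 1) * Real.sin x⁻¹ + x ^ a * (Real.cos x⁻¹ * -(x ^ 2)⁻¹)

lemma hasDerivAt_g {a x : ℝ} (hx : x ≠ 0) : HasDerivAt (g a) (g' a x) x := by
  have h1 : HasDerivAt (fun y : ℝ => y ^ a) (a * x ^ (a - 1)) x :=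
    Real.hasDerivAt_rpow_const (Or.inl hx)
  have h2 : HasDerivAt (fun y : ℝ => Real.sin y⁻¹) (Real.cos x⁻¹ * -(x ^ 2)⁻¹) x :=
    (Real.hasDerivAt_sin x⁻¹).comp x (hasDerivAt_inv hx)
  exact h1.mul h2

def oscD (a x : ℝ) : ℂ := 1 + Complex.I * Complex.ofReal (g' a x)

lemma hasDerivAt_osc {a x : ℝ} (hx : x ≠ 0) : HasDerivAt (oscCurve a) (oscD a x) x := by
  have h1 : HasDerivAt (fun y : ℝ => (Complex.ofReal y)) 1 x := by
    simpa using (hasDerivAt_id x).ofReal_comp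
  have h2 : HasDerivAt (fun y : ℝ => Complex.I * Complex.ofReal (g a y))
      (Complex.I * Complex.ofReal (g' a x)) x := ((hasDerivAt_g hx).ofReal_comp).const_mul _
  convert h1.add h2 using 1
  · rfl
  · rfl
  · rfl

lemma contOn_osc (h : ∀ y ∈ Icc u v, (0:ℝ) < y) : ContinuousOn (oscCurve a) (Icc u v) :=
  fun y hy => ((hasDerivAt_osc (h y hy).ne').continuousAt).continuousWithinAt

lemma contOn_g (h : ∀ y ∈ Icc u v, (0:ℝ) < y) : ContinuousOn (g a) (Icc u v) :=
  fun y hy => ((hasDerivAt_g (h y hy).ne').continuousAt).continuousWithinAt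

lemma rpow_sq_inv (hx : 0 < x) : x ^ a * (x ^ 2)⁻¹ = x ^ (a - 2) := by
  rw [← Real.rpow_natCast x 2, ← Real.rpow_neg hx.le, ← Real.rpow_add hx]
  ring_nf

lemma abs_g'_le (ha1 : 1 < a) (hx : 0 < x) (hx1 : x ≤ 1) :
    |g' a x| ≤ (a + 1) * x ^ (a - 2) := by
  have hxa2 : (0:ℝ) ≤ x ^ (a - 2) := Real.rpow_nonneg hx.le _
  have h1 : |a * x ^ (a - 1) * Real.sin x⁻¹| ≤ a * x ^ (a - 2) := by
    rw [abs_mul]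
    have : |a * x ^ (a - 1)| = a * x ^ (a - 1) := by
      rw [abs_of_nonneg]; positivity
    rw [this]
    calc a * x ^ (a - 1) * |Real.sin x⁻¹| ≤ a * x ^ (a - 1) * 1 := by
          apply mul_le_mul_of_nonneg_left (Real.abs_sin_le_one x⁻¹) (by positivity)
      _ = a * x ^ (a - 1) := by ring
      _ ≤ a * x ^ (a - 2) := by
          apply mul_le_mul_of_nonneg_left
            (Real.rpow_le_rpow_of_exponent_ge hx hx1 (by linarith)) (by linarith)
  have h2 : |x ^ a * (Real.cos x⁻¹ * -(x ^ 2)⁻¹)| ≤ x ^ (a - 2) := by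
    rw [abs_mul, abs_mul, abs_neg, abs_of_nonneg (Real.rpow_nonneg hx.le a),
      abs_of_nonneg (inv_nonneg.2 (sq_nonneg x))]
    calc x ^ a * (|Real.cos x⁻¹| * (x ^ 2)⁻¹) ≤ x ^ a * (1 * (x ^ 2)⁻¹) := by
          apply mul_le_mul_of_nonneg_left
          apply mul_le_mul_of_nonneg_right (Real.abs_cos_le_one x⁻¹) (by positivity)
          positivity
      _ = x ^ a * (x ^ 2)⁻¹ := by ring
      _ = x ^ (a - 2) := rpow_sq_inv hx
  calc |g' a x| ≤ |a * x ^ (a - 1) * Real.sin x⁻¹| + |x ^ a * (Real.cos x⁻¹ * -(x ^ 2)⁻¹)| :=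
        abs_add_le _ _
    _ ≤ a * x ^ (a - 2) + x ^ (a - 2) := add_le_add h1 h2
    _ = (a + 1) * x ^ (a - 2) := by ring

/-- the increasing majorant -/
def phi (a x : ℝ) : ℝ := x + x ^ a + ((a + 1)/(a - 1)) * x ^ (a - 1)

lemma g_zero : g a 0 = 0 := by simp [g]

lemma abs_g_le (ha : 0 < a) (hx : 0 ≤ x) : |g a x| ≤ x ^ a := by
  rcases eq_or_lt_of_le hx with h | h
  · simp [← h, g_zero, Real.zero_rpow ha.ne']
  · calc |g a x| = x ^ a * |Real.sin x⁻¹| := by rw [g, abs_mul, abs_of_nonneg (Real.rpow_nonneg hx a)]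
      _ ≤ x ^ a * 1 := mul_le_mul_of_nonneg_left (Real.abs_sin_le_one _) (by positivity)
      _ = x ^ a := mul_one _

lemma mono_aux (ha1 : 1 < a) {e : ℝ} (he : |e| = 1) (hu : 0 < u) (huv : u ≤ v) (hv1 : v ≤ 1) :
    e * (g a v - g a u) ≤ (a + 1)/(a - 1) * (v ^ (a - 1) - u ^ (a - 1)) := by
  set c : ℝ := (a + 1)/(a - 1) with hc
  set F : ℝ → ℝ := fun x => c * x ^ (a - 1) - e * g a x with hF
  have key : MonotoneOn F (Icc u v) := by
    have hder : ∀ x ∈ Icc u v, HasDerivAt F (c * ((a - 1) * x ^ (a - 1 - 1)) - e * g' a x) x := by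
      intro x hx
      have hx0 : (0:ℝ) < x := lt_of_lt_of_le hu hx.1
      exact ((Real.hasDerivAt_rpow_const (Or.inl hx0.ne')).const_mul c).sub
        ((hasDerivAt_g hx0.ne').const_mul e)
    apply monotoneOn_of_deriv_nonneg (convex_Icc u v)
    · exact fun x hx => (hder x hx).continuousAt.continuousWithinAt
    · intro x hx
      rw [interior_Icc] at hx
      exact ((hder x (Ioo_subset_Icc_self hx)).differentiableAt).differentiableWithinAt
    · intro x hx
      rw [interior_Icc] at hx
      rw [(hder x (Ioo_subset_Icc_self hx)).deriv]
      have hx0 : (0:ℝ) < x := lt_of_lt_of_le hu hx.1.le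
      have hx1 : x ≤ 1 := le_trans hx.2.le hv1
      have hb := abs_g'_le ha1 hx0 hx1
      have h1 : e * g' a x ≤ (a + 1) * x ^ (a - 2) := by
        calc e * g' a x ≤ |e * g' a x| := le_abs_self _
          _ = |g' a x| := by rw [abs_mul, he, one_mul]
          _ ≤ (a + 1) * x ^ (a - 2) := hb
      have hc1 : c * (a - 1) = a + 1 := by
        rw [hc, div_mul_cancel₀]
        linarith
      have h2 : c * ((a - 1) * x ^ (a - 1 - 1)) = (a + 1) * x ^ (a - 2) := by
        have h3 : a - 1 - 1 = a - 2 := by ring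
        calc c * ((a - 1) * x ^ (a - 1 - 1)) = (c * (a - 1)) * x ^ (a - 1 - 1) := by ring
          _ = (a + 1) * x ^ (a - 2) := by rw [hc1, h3]
      rw [h2]
      linarith
  have := key (left_mem_Icc.2 huv) (right_mem_Icc.2 huv) huv
  simp only [hF] at this
  linarith

lemma key_dist (ha1 : 1 < a) (hu : 0 ≤ u) (huv : u ≤ v) (hv1 : v ≤ 1) :
    dist (oscCurve a u) (oscCurve a v) ≤ phi a v - phi a u := by
  have ha0 : (0:ℝ) < a := by linarith
  have hv0 : 0 ≤ v := le_trans hu huv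
  have hre : dist (oscCurve a u) (oscCurve a v) ≤ |v - u| + |g a v - g a u| := by
    rw [Complex.dist_eq]
    have : oscCurve a u - oscCurve a v =
        Complex.ofReal (u - v) + Complex.I * Complex.ofReal (g a u - g a v) := by
      simp only [oscCurve, g]; push_cast; ring
    rw [this]
    calc ‖(_ : ℂ)‖ ≤ |(Complex.ofReal (u - v) + Complex.I * Complex.ofReal (g a u - g a v)).re|
          + |(Complex.ofReal (u - v) + Complex.I * Complex.ofReal (g a u - g a v)).im| :=
        Complex.norm_le_abs_re_add_abs_im _
      _ = |v - u| + |g a v - g a u| := by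
          simp only [Complex.add_re, Complex.ofReal_re, Complex.add_im, Complex.ofReal_im,
            Complex.mul_re, Complex.mul_im, Complex.I_re, Complex.I_im]
          rw [abs_sub_comm v u, abs_sub_comm (g a v) (g a u)]
          ring_nf
  have hgs : |g a v - g a u| ≤ (v ^ a - u ^ a) + (a + 1)/(a - 1) * (v ^ (a - 1) - u ^ (a - 1)) := by
    rcases eq_or_lt_of_le hu with h | h
    · rw [← h, g_zero, Real.zero_rpow ha0.ne', Real.zero_rpow (by linarith : a - 1 ≠ 0)]
      have h1 : |g a v| ≤ v ^ a := abs_g_le ha0 hv0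
      have h2 : (0:ℝ) ≤ (a + 1)/(a-1) * v ^ (a - 1) :=
        mul_nonneg (div_nonneg (by linarith) (by linarith)) (Real.rpow_nonneg hv0 _)
      simp only [sub_zero]
      linarith
    · have hmono : u ^ a ≤ v ^ a := Real.rpow_le_rpow (le_of_lt h) huv ha0.le
      have h1 := mono_aux ha1 (e := 1) (by norm_num) h huv hv1
      have h2 := mono_aux ha1 (e := -1) (by norm_num) h huv hv1
      rw [abs_le]
      constructor <;> nlinarith
  have habs : |v - u| = v - u := abs_of_nonneg (by linarith)
  calc dist (oscCurve a u) (oscCurve a v) ≤ |v - u| + |g a v - g a u| := hre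
    _ ≤ (v - u) + ((v ^ a - u ^ a) + (a + 1)/(a - 1) * (v ^ (a - 1) - u ^ (a - 1))) := by
        rw [habs]; exact add_le_add le_rfl hgs
    _ = phi a v - phi a u := by rw [phi, phi]; ring

lemma phi_zero (ha1 : 1 < a) : phi a 0 = 0 := by
  rw [phi, Real.zero_rpow (by linarith : a ≠ 0),
    Real.zero_rpow (by intro h; rw [sub_eq_zero] at h; linarith : a - 1 ≠ 0)]
  ring

lemma evar_ne_top (ha1 : 1 < a) : eVariationOn (oscCurve a) (Icc 0 1) ≠ ⊤ := by
  have hb : eVariationOn (oscCurve a) (Icc 0 1) ≤ ENNReal.ofReal (phi a 1) := by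
    rw [eVariationOn]
    apply iSup_le
    rintro ⟨n, ⟨u, hu, us⟩⟩
    have hphi : ∀ i : ℕ, 0 ≤ phi a (u (i+1)) - phi a (u i) :=
      fun i => le_trans dist_nonneg (key_dist ha1 (us i).1 (hu (Nat.le_succ i)) (us (i+1)).2)
    calc ∑ i ∈ Finset.range n, edist (oscCurve a (u (i + 1))) (oscCurve a (u i))
        = ∑ i ∈ Finset.range n,
            ENNReal.ofReal (dist (oscCurve a (u i)) (oscCurve a (u (i+1)))) := by
          refine Finset.sum_congr rfl fun i _ => ?_
          rw [edist_dist, dist_comm]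
      _ ≤ ∑ i ∈ Finset.range n, ENNReal.ofReal (phi a (u (i+1)) - phi a (u i)) :=
          Finset.sum_le_sum fun i _ => ENNReal.ofReal_le_ofReal
            (key_dist ha1 (us i).1 (hu (Nat.le_succ i)) (us (i+1)).2)
      _ = ENNReal.ofReal (∑ i ∈ Finset.range n, (phi a (u (i+1)) - phi a (u i))) :=
          (ENNReal.ofReal_sum_of_nonneg fun i _ => hphi i).symm
      _ = ENNReal.ofReal (phi a (u n) - phi a (u 0)) := by
          rw [Finset.sum_range_sub (fun i => phi a (u i))]
      _ ≤ ENNReal.ofReal (phi a 1) := by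
          apply ENNReal.ofReal_le_ofReal
          have h1 : 0 ≤ phi a 1 - phi a (u n) :=
            le_trans dist_nonneg (key_dist ha1 (us n).1 (us n).2 le_rfl)
          have h2 : 0 ≤ phi a (u 0) - phi a 0 :=
            le_trans dist_nonneg (key_dist ha1 le_rfl (us 0).1 (us 0).2)
          have h0 := phi_zero ha1
          linarith
  exact ne_top_of_le_ne_top ENNReal.ofReal_ne_top hb

/-! ### The oscillation points -/

def A (k : ℕ) : ℝ := (π/2 + (k:ℝ)*(2*π))⁻¹
def B (k : ℕ) : ℝ := (-(π/2) + ((k+1 : ℕ):ℝ)*(2*π))⁻¹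

lemma A_den_pos (k : ℕ) : 0 < π/2 + (k:ℝ)*(2*π) := by
  have h : (0:ℝ) ≤ (k:ℝ) := Nat.cast_nonneg k
  nlinarith [pi_pos]

lemma B_den_pos (k : ℕ) : 0 < -(π/2) + ((k+1 : ℕ):ℝ)*(2*π) := by
  have h : (1:ℝ) ≤ ((k+1:ℕ):ℝ) := by exact_mod_cast Nat.one_le_iff_ne_zero.2 (Nat.succ_ne_zero k)
  nlinarith [pi_pos]

lemma A_pos (k : ℕ) : 0 < A k := inv_pos.2 (A_den_pos k)
lemma B_pos (k : ℕ) : 0 < B k := inv_pos.2 (B_den_pos k)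

lemma B_lt_A (k : ℕ) : B k < A k := by
  apply inv_strictAnti₀ (A_den_pos k)
  have h : ((k+1:ℕ):ℝ) = (k:ℝ) + 1 := by push_cast; ring
  rw [h]; nlinarith [pi_pos]

lemma A_succ_lt_B (k : ℕ) : A (k+1) < B k := by
  apply inv_strictAnti₀ (B_den_pos k)
  push_cast
  nlinarith [pi_pos]

lemma A_anti : ∀ {k l : ℕ}, k ≤ l → A l ≤ A k := by
  intro k l hkl
  apply inv_anti₀ (A_den_pos k)
  have : (k:ℝ) ≤ (l:ℝ) := Nat.cast_le.2 hkl
  nlinarith [pi_pos]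

lemma B_anti : ∀ {k l : ℕ}, k ≤ l → B l ≤ B k := by
  intro k l hkl
  apply inv_anti₀ (B_den_pos k)
  have : ((k+1:ℕ):ℝ) ≤ ((l+1:ℕ):ℝ) := Nat.cast_le.2 (by omega)
  nlinarith [pi_pos]

lemma A_lt_one (k : ℕ) : A k < 1 := by
  rw [A, inv_lt_one_iff₀]
  right
  have h : (0:ℝ) ≤ (k:ℝ) := Nat.cast_nonneg k
  nlinarith [pi_gt_three]

lemma g_A (k : ℕ) : g a (A k) = A k ^ a := by
  rw [g, A, inv_inv, Real.sin_add_nat_mul_two_pi, Real.sin_pi_div_two, mul_one]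

lemma g_B (k : ℕ) : g a (B k) = -(B k ^ a) := by
  rw [g, B, inv_inv, Real.sin_add_nat_mul_two_pi (-(π/2)) (k+1), Real.sin_neg,
    Real.sin_pi_div_two, mul_neg_one]

lemma lipschitz_im : LipschitzWith 1 Complex.im := by
  apply LipschitzWith.of_dist_le_mul
  intro z w
  rw [NNReal.coe_one, one_mul, Real.dist_eq, Complex.dist_eq, ← Complex.sub_im]
  exact Complex.abs_im_le_norm _

lemma im_osc (a x : ℝ) : (oscCurve a x).im = g a x := by
  simp only [oscCurve, g, Complex.add_im, Complex.ofReal_im, Complex.mul_im, Complex.I_re,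
    Complex.I_im, Complex.ofReal_re, zero_mul, one_mul, zero_add]

lemma re_osc (a x : ℝ) : (oscCurve a x).re = x := by
  simp only [oscCurve, Complex.add_re, Complex.ofReal_re, Complex.mul_re, Complex.I_re,
    Complex.I_im, Complex.ofReal_im, zero_mul, one_mul, mul_zero, sub_zero]
  ring

lemma piece_lb (ha : 0 < a) (k : ℕ) :
    ENNReal.ofReal (B k ^ a) ≤ μH[1] (oscCurve a '' Icc (B k) (A k)) := by
  have hBA : B k ≤ A k := (B_lt_A k).le
  have hpos : ∀ y ∈ Icc (B k) (A k), (0:ℝ) < y := fun y hy => lt_of_lt_of_le (B_pos k) hy.1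
  have hsub : Icc (g a (B k)) (g a (A k)) ⊆ g a '' Icc (B k) (A k) :=
    intermediate_value_Icc hBA (contOn_g hpos)
  have him : Complex.im '' (oscCurve a '' Icc (B k) (A k)) = g a '' Icc (B k) (A k) := by
    rw [Set.image_image]
    exact Set.image_congr fun x _ => im_osc a x
  calc ENNReal.ofReal (B k ^ a)
      ≤ ENNReal.ofReal (g a (A k) - g a (B k)) := by
        apply ENNReal.ofReal_le_ofReal
        rw [g_A, g_B]
        have : (0:ℝ) ≤ A k ^ a := Real.rpow_nonneg (A_pos k).le a
        linarith
    _ = μH[1] (Icc (g a (B k)) (g a (A k))) := by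
        rw [MeasureTheory.hausdorffMeasure_real, Real.volume_Icc]
    _ ≤ μH[1] (g a '' Icc (B k) (A k)) := measure_mono hsub
    _ = μH[1] (Complex.im '' (oscCurve a '' Icc (B k) (A k))) := by rw [him]
    _ ≤ 1 * μH[1] (oscCurve a '' Icc (B k) (A k)) := by
        simpa using lipschitz_im.hausdorffMeasure_image_le (by norm_num : (0:ℝ) ≤ 1) _
    _ = _ := one_mul _

lemma S_meas (hu : 0 < u) : MeasurableSet (oscCurve a '' Icc u v) := by
  rcases le_or_gt u v with h | h
  · exact ((isCompact_Icc).image_of_continuousOn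
      (contOn_osc (fun y hy => lt_of_lt_of_le hu hy.1))).measurableSet
  · rw [Icc_eq_empty_of_lt h]; simp

lemma S_disj (K : ℕ) : (↑(Finset.range K) : Set ℕ).PairwiseDisjoint
    (fun k => oscCurve a '' Icc (B (K+k)) (A (K+k))) := by
  have key : ∀ k l : ℕ, k < l →
      Disjoint (oscCurve a '' Icc (B (K+k)) (A (K+k))) (oscCurve a '' Icc (B (K+l)) (A (K+l))) := by
    intro k l hkl
    rw [Set.disjoint_left]
    rintro z ⟨x, hx, rfl⟩ ⟨y, hy, hyz⟩
    have hxy : y = x := by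
      have := congrArg Complex.re hyz
      rwa [re_osc, re_osc] at this
    subst hxy
    have h1 : A (K+l) < B (K+k) :=
      lt_of_le_of_lt (A_anti (by omega : K+k+1 ≤ K+l)) (A_succ_lt_B (K+k))
    have := hy.2
    have := hx.1
    linarith
  intro i hi j hj hij
  rcases lt_or_gt_of_ne hij with h | h
  · exact key i j h
  · exact (key j i h).symm

lemma osc_mem_ball (ha1 : 1 < a) (hx0 : 0 < x) (hx1 : x < 1) :
    oscCurve a x ∈ ball (0:ℂ) (2 * x) := by
  rw [mem_ball, dist_zero_right]
  have h1 : ‖oscCurve a x‖ ≤ |(oscCurve a x).re| + |(oscCurve a x).im| :=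
    Complex.norm_le_abs_re_add_abs_im _
  rw [re_osc, im_osc, abs_of_pos hx0] at h1
  have h2 : |g a x| ≤ x ^ a := abs_g_le (by linarith) hx0.le
  have h3 : x ^ a < x := by
    have := Real.rpow_lt_rpow_of_exponent_gt hx0 hx1 ha1
    rwa [Real.rpow_one] at this
  calc ‖oscCurve a x‖ ≤ x + |g a x| := h1
    _ ≤ x + x ^ a := by linarith
    _ < 2 * x := by linarith

lemma sum_lb (ha1 : 1 < a) (K : ℕ) :
    ENNReal.ofReal ((K:ℝ) * B (2*K) ^ a) ≤
      (μH[1] : Measure ℂ).restrict (oscCurve a '' Icc 0 1) (ball 0 (2 * A K)) := by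
  have ha0 : (0:ℝ) < a := by linarith
  rw [Measure.restrict_apply measurableSet_ball]
  set S : ℕ → Set ℂ := fun k => oscCurve a '' Icc (B (K+k)) (A (K+k)) with hS
  have hsub : ∀ k ∈ Finset.range K, S k ⊆ ball (0:ℂ) (2 * A K) ∩ (oscCurve a '' Icc 0 1) := by
    intro k _
    rintro z ⟨x, hx, rfl⟩
    have hx0 : 0 < x := lt_of_lt_of_le (B_pos _) hx.1
    have hxA : x ≤ A K := le_trans hx.2 (A_anti (Nat.le_add_right K k))
    have hx1 : x < 1 := lt_of_le_of_lt hxA (A_lt_one K)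
    constructor
    · exact ball_subset_ball (by linarith : 2 * x ≤ 2 * A K) (osc_mem_ball ha1 hx0 hx1)
    · exact ⟨x, ⟨hx0.le, hx1.le⟩, rfl⟩
  calc ENNReal.ofReal ((K:ℝ) * B (2*K) ^ a)
      = ∑ _k ∈ Finset.range K, ENNReal.ofReal (B (2*K) ^ a) := by
        rw [Finset.sum_const, Finset.card_range, nsmul_eq_mul,
          ← ENNReal.ofReal_natCast K, ← ENNReal.ofReal_mul (Nat.cast_nonneg K)]
    _ ≤ ∑ k ∈ Finset.range K, μH[1] (S k) := by
        apply Finset.sum_le_sum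
        intro k hk
        refine le_trans ?_ (piece_lb ha0 (K+k))
        apply ENNReal.ofReal_le_ofReal
        exact Real.rpow_le_rpow (B_pos _).le (B_anti (by simp at hk; omega)) ha0.le
    _ = μH[1] (⋃ k ∈ Finset.range K, S k) :=
        (measure_biUnion_finset (S_disj K) (fun k _ => S_meas (B_pos _))).symm
    _ ≤ μH[1] (ball (0:ℂ) (2 * A K) ∩ (oscCurve a '' Icc 0 1)) :=
        measure_mono (Set.iUnion₂_subset hsub)

/-! ### Finiteness of the total length -/

def M (a : ℝ) (n : ℕ) : ℝ := 1 + (a + 1) * ((n:ℝ) + 2) ^ (2 - a)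

lemma M_nonneg (ha1 : 1 < a) (n : ℕ) : 0 ≤ M a n := by
  have : (0:ℝ) ≤ ((n:ℝ) + 2) ^ (2 - a) := Real.rpow_nonneg (by positivity) _
  have h2 : (0:ℝ) ≤ (a+1) := by linarith
  unfold M; nlinarith

lemma norm_oscD_le (ha1 : 1 < a) (ha2 : a < 2) (hx : 0 < x) (hx1 : x ≤ 1) {n : ℕ}
    (hxn : ((n:ℝ) + 2)⁻¹ ≤ x) : ‖oscD a x‖ ≤ M a n := by
  have h1 : ‖oscD a x‖ ≤ 1 + |g' a x| := by
    rw [oscD]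
    calc ‖(1:ℂ) + Complex.I * Complex.ofReal (g' a x)‖
        ≤ ‖(1:ℂ)‖ + ‖Complex.I * Complex.ofReal (g' a x)‖ := norm_add_le _ _
      _ = 1 + |g' a x| := by
          rw [norm_one, norm_mul, Complex.norm_I, one_mul, Complex.norm_real, Real.norm_eq_abs]
  have hn2 : (0:ℝ) < (n:ℝ) + 2 := by positivity
  have h2 : x ^ (a - 2) ≤ ((n:ℝ) + 2) ^ (2 - a) := by
    have := Real.rpow_le_rpow_of_nonpos (inv_pos.2 hn2) hxn (by linarith : a - 2 ≤ 0)
    calc x ^ (a - 2) ≤ (((n:ℝ) + 2)⁻¹) ^ (a - 2) := this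
      _ = ((n:ℝ) + 2) ^ (2 - a) := by
          rw [Real.inv_rpow hn2.le, ← Real.rpow_neg hn2.le]
          ring_nf
  have h3 : |g' a x| ≤ (a + 1) * x ^ (a - 2) := abs_g'_le ha1 hx hx1
  have h4 : (a + 1) * x ^ (a - 2) ≤ (a + 1) * ((n:ℝ) + 2) ^ (2 - a) :=
    mul_le_mul_of_nonneg_left h2 (by linarith)
  unfold M; linarith

lemma lip_piece (ha1 : 1 < a) (ha2 : a < 2) (n : ℕ) :
    LipschitzOnWith (M a n).toNNReal (oscCurve a) (Icc (((n:ℝ) + 2)⁻¹) (((n:ℝ) + 1)⁻¹)) := by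
  have hn2 : (0:ℝ) < (n:ℝ) + 2 := by positivity
  have hn1 : (0:ℝ) < (n:ℝ) + 1 := by positivity
  apply (convex_Icc _ _).lipschitzOnWith_of_nnnorm_hasDerivWithin_le
    (f' := fun x => oscD a x)
  · intro x hx
    exact (hasDerivAt_osc (lt_of_lt_of_le (inv_pos.2 hn2) hx.1).ne').hasDerivWithinAt
  · intro x hx
    have hx0 : 0 < x := lt_of_lt_of_le (inv_pos.2 hn2) hx.1
    have hx1 : x ≤ 1 := le_trans hx.2 (by rw [inv_le_one_iff₀]; right; linarith)
    rw [← norm_toNNReal]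
    exact Real.toNNReal_le_toNNReal (norm_oscD_le ha1 ha2 hx0 hx1 hx.1)

lemma cover (ha1 : 1 < a) : oscCurve a '' Icc 0 1 ⊆
    {oscCurve a 0} ∪ ⋃ n : ℕ, oscCurve a '' Icc (((n:ℝ) + 2)⁻¹) (((n:ℝ) + 1)⁻¹) := by
  rintro z ⟨x, hx, rfl⟩
  rcases eq_or_lt_of_le hx.1 with h | h
  · left; rw [← h]; rfl
  · right
    have hx1 : (1:ℝ) ≤ x⁻¹ := (one_le_inv₀ h).2 hx.2
    set m := ⌊x⁻¹⌋₊ with hm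
    have hm1 : 1 ≤ m := Nat.one_le_iff_ne_zero.2 (by
      intro h0
      have := Nat.floor_eq_zero.1 h0
      linarith)
    refine Set.mem_iUnion.2 ⟨m - 1, ⟨x, ⟨?_, ?_⟩, rfl⟩⟩
    · have h2 : x⁻¹ < (m:ℝ) + 1 := Nat.lt_floor_add_one x⁻¹
      have h3 : ((m - 1 : ℕ):ℝ) + 2 = (m:ℝ) + 1 := by
        have : ((m - 1 : ℕ):ℝ) = (m:ℝ) - 1 := by
          push_cast [Nat.cast_sub hm1]; ring
        rw [this]; ring
      rw [h3]
      rw [inv_le_comm₀ (by linarith) h]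
      linarith
    · have h2 : (m:ℝ) ≤ x⁻¹ := Nat.floor_le (by linarith)
      have h3 : ((m - 1 : ℕ):ℝ) + 1 = (m:ℝ) := by
        have : ((m - 1 : ℕ):ℝ) = (m:ℝ) - 1 := by
          push_cast [Nat.cast_sub hm1]; ring
        rw [this]; ring
      rw [h3]
      have hm0 : (0:ℝ) < (m:ℝ) := by exact_mod_cast hm1
      rw [le_inv_comm₀ h hm0]
      exact h2

lemma summable_M (ha1 : 1 < a) : Summable (fun n : ℕ => M a n * (((n:ℝ) + 1)⁻¹ - ((n:ℝ) + 2)⁻¹)) := by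
  have hbound : ∀ n : ℕ, M a n * (((n:ℝ) + 1)⁻¹ - ((n:ℝ) + 2)⁻¹) ≤
      ((n:ℝ) + 1) ^ (-2 : ℝ) + (a + 1) * ((n:ℝ) + 1) ^ (-a) := by
    intro n
    set y : ℝ := (n:ℝ) + 1 with hy
    set z : ℝ := (n:ℝ) + 2 with hz
    have hy0 : (0:ℝ) < y := by positivity
    have hz0 : (0:ℝ) < z := by positivity
    have hyz : y ≤ z := by rw [hy, hz]; linarith
    have hdiff : y⁻¹ - z⁻¹ = (y * z)⁻¹ := by
      rw [inv_sub_inv hy0.ne' hz0.ne', show z - y = 1 by rw [hy, hz]; ring, one_div]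
    have e1 : z ^ (2 - a) * (y * z)⁻¹ ≤ y ^ (-a) := by
      have ezz : z ^ (2 - a) * z⁻¹ = z ^ (1 - a) := by
        rw [← Real.rpow_neg_one z, ← Real.rpow_add hz0]
        ring_nf
      have ez1 : z ^ (1 - a) ≤ y ^ (1 - a) :=
        Real.rpow_le_rpow_of_nonpos hy0 hyz (by linarith)
      have ey : y ^ (1 - a) * y⁻¹ = y ^ (-a) := by
        rw [← Real.rpow_neg_one y, ← Real.rpow_add hy0]
        ring_nf
      calc z ^ (2 - a) * (y * z)⁻¹ = (z ^ (2 - a) * z⁻¹) * y⁻¹ := by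
            rw [mul_inv]; ring
        _ = z ^ (1 - a) * y⁻¹ := by rw [ezz]
        _ ≤ y ^ (1 - a) * y⁻¹ := mul_le_mul_of_nonneg_right ez1 (by positivity)
        _ = y ^ (-a) := ey
    have e2 : (y * z)⁻¹ ≤ y ^ (-2 : ℝ) := by
      rw [Real.rpow_neg hy0.le, Real.rpow_two]
      apply inv_anti₀ (by positivity)
      nlinarith
    have hM : M a n * (y⁻¹ - z⁻¹) = (y * z)⁻¹ + (a + 1) * (z ^ (2 - a) * (y * z)⁻¹) := by
      rw [hdiff, M]; ring
    rw [hM]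
    have : (a + 1) * (z ^ (2 - a) * (y * z)⁻¹) ≤ (a + 1) * y ^ (-a) :=
      mul_le_mul_of_nonneg_left e1 (by linarith)
    linarith
  have hs1 : Summable (fun n : ℕ => ((n:ℝ) + 1) ^ (-2 : ℝ)) := by
    have := (summable_nat_add_iff (f := fun n : ℕ => (n:ℝ) ^ (-2 : ℝ)) 1).2
      (Real.summable_nat_rpow.2 (by norm_num))
    simpa using this
  have hs2 : Summable (fun n : ℕ => ((n:ℝ) + 1) ^ (-a)) := by
    have := (summable_nat_add_iff (f := fun n : ℕ => (n:ℝ) ^ (-a)) 1).2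
      (Real.summable_nat_rpow.2 (by linarith))
    simpa using this
  apply Summable.of_nonneg_of_le _ hbound (hs1.add (hs2.mul_left (a + 1)))
  intro n
  apply mul_nonneg (M_nonneg ha1 n)
  have h1 : ((n:ℝ) + 1) ≤ ((n:ℝ) + 2) := by linarith
  have := inv_anti₀ (by positivity : (0:ℝ) < (n:ℝ) + 1) h1
  linarith

lemma total_lt_top (ha1 : 1 < a) (ha2 : a < 2) : μH[1] (oscCurve a '' Icc 0 1) < ⊤ := by
  haveI := MeasureTheory.Measure.noAtoms_hausdorff ℂ one_pos
  apply lt_of_le_of_lt (measure_mono (cover ha1))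
  apply lt_of_le_of_lt (measure_union_le _ _)
  have h1 : μH[1] ({oscCurve a 0} : Set ℂ) = 0 := measure_singleton _
  rw [h1, zero_add]
  apply lt_of_le_of_lt (measure_iUnion_le _)
  have hterm : ∀ n : ℕ, μH[1] (oscCurve a '' Icc (((n:ℝ) + 2)⁻¹) (((n:ℝ) + 1)⁻¹)) ≤
      ENNReal.ofReal (M a n * (((n:ℝ) + 1)⁻¹ - ((n:ℝ) + 2)⁻¹)) := by
    intro n
    have hlip := lip_piece ha1 ha2 n
    calc μH[1] (oscCurve a '' Icc (((n:ℝ) + 2)⁻¹) (((n:ℝ) + 1)⁻¹))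
        ≤ ((M a n).toNNReal : ℝ≥0∞) ^ (1:ℝ) *
            μH[1] (Icc (((n:ℝ) + 2)⁻¹) (((n:ℝ) + 1)⁻¹)) :=
          hlip.hausdorffMeasure_image_le (by norm_num)
      _ = ENNReal.ofReal (M a n) * ENNReal.ofReal ((((n:ℝ) + 1)⁻¹ - ((n:ℝ) + 2)⁻¹)) := by
          rw [MeasureTheory.hausdorffMeasure_real, Real.volume_Icc, ENNReal.rpow_one]
          rfl
      _ = ENNReal.ofReal (M a n * (((n:ℝ) + 1)⁻¹ - ((n:ℝ) + 2)⁻¹)) :=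
          (ENNReal.ofReal_mul (M_nonneg ha1 n)).symm
  apply lt_of_le_of_lt (ENNReal.tsum_le_tsum hterm)
  rw [← ENNReal.ofReal_tsum_of_nonneg _ (summable_M ha1)]
  · exact ENNReal.ofReal_lt_top
  · intro n
    apply mul_nonneg (M_nonneg ha1 n)
    have h1 : ((n:ℝ) + 1) ≤ ((n:ℝ) + 2) := by linarith
    have := inv_anti₀ (by positivity : (0:ℝ) < (n:ℝ) + 1) h1
    linarith

lemma not_ball_bound (ha1 : 1 < a) (ha2 : a < 2) :
    ¬ ∃ C : ℝ, ∀ R : ℝ, 0 < R →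
      (arcMeasure (oscCurve a '' Icc 0 1) (ball 0 R)).toReal ≤ C * R := by
  rintro ⟨C, hC⟩
  have ha0 : (0:ℝ) < a := by linarith
  have htend : Tendsto (fun K : ℕ => ((K:ℝ)) ^ ((2:ℝ) - a)) atTop atTop :=
    (tendsto_rpow_atTop (by linarith : (0:ℝ) < 2 - a)).comp tendsto_natCast_atTop_atTop
  obtain ⟨K, hKgt, hK1⟩ :=
    ((htend.eventually_gt_atTop (2 * |C| * 24 ^ a)).and (eventually_ge_atTop 1)).exists
  set x : ℝ := (K:ℝ) with hxK
  have hx1 : (1:ℝ) ≤ x := by rw [hxK]; exact_mod_cast hK1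
  have hx0 : (0:ℝ) < x := by linarith
  set R : ℝ := 2 * A K with hR
  have hRpos : 0 < R := by
    have := A_pos K
    rw [hR]; linarith
  have hballC := hC R hRpos
  have hfin : arcMeasure (oscCurve a '' Icc 0 1) (ball 0 R) ≠ ⊤ := by
    apply ne_top_of_le_ne_top (total_lt_top ha1 ha2).ne
    rw [arcMeasure, Measure.restrict_apply measurableSet_ball]
    exact measure_mono inter_subset_right
  have hlow : (K:ℝ) * B (2*K) ^ a ≤ (arcMeasure (oscCurve a '' Icc 0 1) (ball 0 R)).toReal :=
    (ENNReal.ofReal_le_iff_le_toReal hfin).1 (sum_lb ha1 K)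
  have hmain : (K:ℝ) * B (2*K) ^ a ≤ C * R := le_trans hlow hballC
  have hA_le : A K ≤ x⁻¹ := by
    rw [A]
    apply inv_anti₀ hx0
    nlinarith [pi_gt_three]
  have hB_ge : (24 * x)⁻¹ ≤ B (2*K) := by
    rw [B]
    apply inv_anti₀ (B_den_pos (2*K))
    have hc : ((2*K+1 : ℕ):ℝ) = 2*x + 1 := by push_cast [hxK]; ring
    rw [hc]
    nlinarith [pi_le_four, pi_pos]
  have hBpow : ((24 * x)⁻¹) ^ a ≤ B (2*K) ^ a :=
    Real.rpow_le_rpow (by positivity) hB_ge ha0.le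
  have hCR : C * R ≤ 2 * |C| * x⁻¹ := by
    calc C * R ≤ |C| * R := mul_le_mul_of_nonneg_right (le_abs_self C) hRpos.le
      _ = |C| * 2 * A K := by rw [hR]; ring
      _ ≤ |C| * 2 * x⁻¹ := mul_le_mul_of_nonneg_left hA_le (by positivity)
      _ = 2 * |C| * x⁻¹ := by ring
  have hchain : x * ((24 * x)⁻¹) ^ a ≤ 2 * |C| * x⁻¹ := by
    calc x * ((24 * x)⁻¹) ^ a ≤ x * B (2*K) ^ a := mul_le_mul_of_nonneg_left hBpow hx0.le
      _ ≤ C * R := hmain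
      _ ≤ 2 * |C| * x⁻¹ := hCR
  have h24 : (0:ℝ) < 24 := by norm_num
  have hsplit : ((24 * x)⁻¹) ^ a = 24 ^ (-a) * x ^ (-a) := by
    rw [inv_rpow (by positivity), ← Real.rpow_neg (by positivity),
      Real.mul_rpow h24.le hx0.le, Real.rpow_neg h24.le, Real.rpow_neg hx0.le,
      ← Real.rpow_neg h24.le, ← Real.rpow_neg hx0.le]
  have hxx : x * x * x ^ (-a) = x ^ ((2:ℝ) - a) := by
    rw [show (2:ℝ) - a = 1 + 1 + (-a) by ring, Real.rpow_add hx0, Real.rpow_add hx0,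
      Real.rpow_one]
  have hfinal : x ^ ((2:ℝ) - a) * 24 ^ (-a) ≤ 2 * |C| := by
    have h := mul_le_mul_of_nonneg_left hchain hx0.le
    rw [hsplit] at h
    calc x ^ ((2:ℝ) - a) * 24 ^ (-a) = x * (24 ^ (-a) * x ^ (-a)) * x := by
          rw [← hxx]; ring
      _ ≤ 2 * |C| * x⁻¹ * x := by
          apply mul_le_mul_of_nonneg_right _ hx0.le
          calc x * (24 ^ (-a) * x ^ (-a)) = x * (24 * x)⁻¹ ^ a := by rw [hsplit]
            _ ≤ 2 * |C| * x⁻¹ := hchain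
      _ = 2 * |C| := by field_simp
  have hcontra : 2 * |C| * 24 ^ a * 24 ^ (-a) < x ^ ((2:ℝ) - a) * 24 ^ (-a) := by
    apply mul_lt_mul_of_pos_right hKgt (Real.rpow_pos_of_pos h24 _)
  rw [mul_assoc, ← Real.rpow_add h24, add_neg_cancel, Real.rpow_zero, mul_one] at hcontra
  linarith

end S14

/-- For `1 < α < 2`, the curve `Γ_α = {0} ∪ {x + i x^α sin(1/x) : 0 < x ≤ 1}` is
rectifiable but not a Carleson curve; indeed `sup_{R > 0} |Γ_α(t,R)|/R = ∞` already at
the point `t = 0`. -/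
theorem statement14 (a : ℝ) (ha1 : 1 < a) (ha2 : a < 2) :
    eVariationOn (oscCurve a) (Icc 0 1) ≠ ⊤ ∧
    ¬ IsCarleson (oscCurve a '' Icc 0 1) ∧
    ¬ ∃ C : ℝ, ∀ R : ℝ, 0 < R →
      (arcMeasure (oscCurve a '' Icc 0 1) (ball 0 R)).toReal ≤ C * R := by
  have hzero : (0:ℂ) ∈ oscCurve a '' Icc 0 1 := by
    refine ⟨0, ⟨le_rfl, zero_le_one⟩, ?_⟩
    simp [oscCurve, Real.zero_rpow (by linarith : a ≠ 0)]
  refine ⟨S14.evar_ne_top ha1, ?_, S14.not_ball_bound ha1 ha2⟩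
  rintro ⟨C, hC⟩
  exact S14.not_ball_bound ha1 ha2 ⟨C, fun R hR => hC 0 hzero R hR⟩

end
end
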